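/- Let K be a nonempty closed convex bounded subset of a Hilbert space H, let ‖K‖ = sup_{y ∈ K} ‖y‖, and let C = cone({1} ⊕ K) ⊆ ℝ ⊕ H be the cone generated by the lifting of K. Then for every x ∈ H: dist(1 ⊕ x, C) ≤ dist(x, K) ≤ (1 + ‖K‖) · dist(1 ⊕ x, C). -/

import Mathlib

private lemma le_infDist_aux {X : Type*} [MetricSpace X] {s : Set X} {x : X} {b : ℝ}
    (hs : s.Nonempty) (h : ∀ y ∈ s, b ≤ dist x y) : b ≤ Metric.infDist x s := by
  by_contra hb
  push_neg at hb
  obtain ⟨y, hy, hlt⟩ := (Metric.infDist_lt_iff hs).mp hb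
  exact absurd hlt (not_lt.mpr (h y hy))

theorem dist_lifting_cone
    {H : Type*} [NormedAddCommGroup H] [InnerProductSpace ℝ H] [CompleteSpace H]
    (K : Set H) (hKne : K.Nonempty) (hKcl : IsClosed K) (hKconv : Convex ℝ K)
    (hKbd : Bornology.IsBounded K)
    (M : ℝ) (hM : M = sSup ((fun y => ‖y‖) '' K))
    (C : Set (WithLp 2 (ℝ × H)))
    (hC : C = {z | ∃ a : ℝ, 0 ≤ a ∧ ∃ k ∈ K,
        z = a • (WithLp.equiv 2 (ℝ × H)).symm (1, k)})
    (x : H) :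
    Metric.infDist ((WithLp.equiv 2 (ℝ × H)).symm (1, x)) C ≤ Metric.infDist x K ∧
    Metric.infDist x K ≤
      (1 + M) * Metric.infDist ((WithLp.equiv 2 (ℝ × H)).symm (1, x)) C := by
  have hbdd : BddAbove ((fun y => ‖y‖) '' K) := by
    obtain ⟨R, hR⟩ := hKbd.exists_norm_le
    exact ⟨R, by rintro _ ⟨k, hk, rfl⟩; exact hR k hk⟩
  have hMk : ∀ k ∈ K, ‖k‖ ≤ M := fun k hk => hM ▸ le_csSup hbdd ⟨k, hk, rfl⟩
  obtain ⟨k0, hk0⟩ := hKne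
  have hM0 : (0:ℝ) ≤ M := le_trans (norm_nonneg k0) (hMk k0 hk0)
  have hCne : C.Nonempty :=
    ⟨(WithLp.equiv 2 (ℝ × H)).symm (1, k0),
      hC ▸ ⟨1, zero_le_one, k0, hk0, (one_smul _ _).symm⟩⟩
  have hdist : ∀ a : ℝ, ∀ k : H,
      dist ((WithLp.equiv 2 (ℝ × H)).symm (1, x))
        (a • (WithLp.equiv 2 (ℝ × H)).symm (1, k))
        = Real.sqrt ((1 - a) ^ 2 + ‖x - a • k‖ ^ 2) := by
    intro a k
    show dist (WithLp.toLp 2 (1, x)) (a • WithLp.toLp 2 (1, k)) = _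
    rw [← WithLp.toLp_smul, WithLp.prod_dist_eq_of_L2]
    simp [Prod.smul_mk, smul_eq_mul,
      mul_one, Real.dist_eq, dist_eq_norm, Real.norm_eq_abs, sq_abs]
  constructor
  · refine le_infDist_aux ⟨k0, hk0⟩ fun k hk => ?_
    have hmem : (1:ℝ) • (WithLp.equiv 2 (ℝ × H)).symm (1, k) ∈ C :=
      hC ▸ ⟨1, zero_le_one, k, hk, rfl⟩
    calc Metric.infDist ((WithLp.equiv 2 (ℝ × H)).symm (1, x)) C
        ≤ dist ((WithLp.equiv 2 (ℝ × H)).symm (1, x))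
            ((1:ℝ) • (WithLp.equiv 2 (ℝ × H)).symm (1, k)) :=
          Metric.infDist_le_dist_of_mem hmem
      _ = Real.sqrt ((1 - 1) ^ 2 + ‖x - (1:ℝ) • k‖ ^ 2) := hdist 1 k
      _ = dist x k := by
          rw [one_smul, dist_eq_norm]
          simp [Real.sqrt_sq (norm_nonneg _)]
  · have h1M : (0:ℝ) < 1 + M := by linarith
    rw [← div_le_iff₀' h1M]
    refine le_infDist_aux hCne fun z hz => ?_
    rw [hC] at hz
    obtain ⟨a, ha, k, hk, rfl⟩ := hz
    rw [hdist a k, div_le_iff₀' h1M]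
    set s := ‖x - a • k‖ with hs
    set t := |1 - a| with ht
    have hd : Real.sqrt ((1 - a) ^ 2 + s ^ 2) = Real.sqrt (t ^ 2 + s ^ 2) := by
      rw [ht, sq_abs]
    rw [hd]
    have hsle : s ≤ Real.sqrt (t ^ 2 + s ^ 2) :=
      calc s = Real.sqrt (s ^ 2) := (Real.sqrt_sq (norm_nonneg _)).symm
        _ ≤ Real.sqrt (t ^ 2 + s ^ 2) := Real.sqrt_le_sqrt (by nlinarith [sq_nonneg t])
    have htle : t ≤ Real.sqrt (t ^ 2 + s ^ 2) :=
      calc t = Real.sqrt (t ^ 2) := (Real.sqrt_sq (abs_nonneg _)).symm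
        _ ≤ Real.sqrt (t ^ 2 + s ^ 2) := Real.sqrt_le_sqrt (by nlinarith [sq_nonneg s])
    have hxk : Metric.infDist x K ≤ s + t * M := by
      refine le_trans (Metric.infDist_le_dist_of_mem hk) ?_
      rw [dist_eq_norm]
      calc ‖x - k‖ = ‖(x - a • k) + (a - 1) • k‖ := by
            congr 1
            rw [sub_smul, one_smul]
            abel
        _ ≤ ‖x - a • k‖ + ‖(a - 1) • k‖ := norm_add_le _ _
        _ = s + |a - 1| * ‖k‖ := by rw [norm_smul, Real.norm_eq_abs]
        _ ≤ s + t * M := by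
            rw [ht, abs_sub_comm]
            exact add_le_add_right
              (mul_le_mul_of_nonneg_left (hMk k hk) (abs_nonneg _)) s
    calc Metric.infDist x K ≤ s + t * M := hxk
      _ ≤ Real.sqrt (t ^ 2 + s ^ 2) + Real.sqrt (t ^ 2 + s ^ 2) * M := by
          gcongr
      _ = (1 + M) * Real.sqrt (t ^ 2 + s ^ 2) := by ring
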